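/- Let p be an odd prime, q a primitive root mod p^2, q̂ = q^{p-1}. Define C_{n,i} = (-1)^{n-i} q̂^{binom(n-i,2)} [n choose i]_{q̂} / p^{δ_p(n)} ∈ Q, where [n choose i]_{q̂} is the Gaussian binomial evaluated at q̂. Then C_{n,n} = u/p^{δ_p(n)} for some unit u ∈ Z_(p)^×, C_{n,i} ∈ p^{-δ_p(n)}Z_(p) for 0 ≤ i < n, and C_{n,i} = 0 for i > n. -/

import Mathlib

/-- The Gaussian (q-)binomial coefficient, via the Pascal-type recursion. -/
def gaussBinom {R : Type*} [CommRing R] (t : R) : ℕ → ℕ → R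
  | _, 0 => 1
  | 0, _ + 1 => 0
  | n + 1, i + 1 => gaussBinom t n i + t ^ (i + 1) * gaussBinom t n (i + 1)

/-- `x ∈ ℤ_(p)` : a rational is a `p`-local integer iff `p` does not divide its denominator. -/
def inZLoc (p : ℕ) (x : ℚ) : Prop := ¬ (p ∣ x.den)

/-- `x` is a unit of `ℤ_(p)` : `p` divides neither numerator nor denominator. -/
def isUnitZLoc (p : ℕ) (x : ℚ) : Prop := inZLoc p x ∧ ¬ ((p : ℤ) ∣ x.num)

/-- `q` is a primitive root modulo `m`. -/
def IsPrimitiveRootMod (q : ℤ) (m : ℕ) : Prop :=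
  ∃ u : (ZMod m)ˣ, (u : ZMod m) = (q : ZMod m) ∧ ∀ v : (ZMod m)ˣ, v ∈ Subgroup.zpowers u

/-- `δ_p(n) = n + ν_p(n!)`. -/
def deltaP (p n : ℕ) : ℕ := n + (n.factorial).factorization p

lemma gaussBinom_map {R S : Type*} [CommRing R] [CommRing S] (f : R →+* S) (t : R) :
    ∀ n i, f (gaussBinom t n i) = gaussBinom (f t) n i
  | _, 0 => by simp [gaussBinom]
  | 0, _ + 1 => by simp [gaussBinom]
  | n + 1, i + 1 => by
    simp [gaussBinom, gaussBinom_map f t n i, gaussBinom_map f t n (i + 1)]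

lemma gaussBinom_eq_zero {R : Type*} [CommRing R] (t : R) :
    ∀ n i, n < i → gaussBinom t n i = 0
  | 0, _ + 1, _ => rfl
  | n + 1, i + 1, h => by
    have h1 : n < i := by omega
    have h2 : n < i + 1 := by omega
    simp [gaussBinom, gaussBinom_eq_zero t n i h1, gaussBinom_eq_zero t n (i + 1) h2]

lemma gaussBinom_self {R : Type*} [CommRing R] (t : R) :
    ∀ n, gaussBinom t n n = 1
  | 0 => rfl
  | n + 1 => by
    simp [gaussBinom, gaussBinom_self t n, gaussBinom_eq_zero t n (n + 1) (by omega)]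

theorem coeffs_C_valuation (p : ℕ) (hp : p.Prime) (hodd : Odd p)
    (q : ℤ) (hq : IsPrimitiveRootMod q (p ^ 2))
    (qh : ℚ) (hqh : qh = (q : ℚ) ^ (p - 1))
    (C : ℕ → ℕ → ℚ)
    (hC : ∀ n i, C n i = (-1) ^ (n - i) * qh ^ Nat.choose (n - i) 2 *
        gaussBinom qh n i / (p : ℚ) ^ deltaP p n) :
    (∀ n, isUnitZLoc p ((p : ℚ) ^ deltaP p n * C n n)) ∧
    (∀ n i, i < n → inZLoc p ((p : ℚ) ^ deltaP p n * C n i)) ∧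
    (∀ n i, n < i → C n i = 0) := by
  have hpne : ∀ n, ((p : ℚ) ^ deltaP p n) ≠ 0 := fun n =>
    pow_ne_zero _ (Nat.cast_ne_zero.mpr hp.ne_zero)
  have hcancel : ∀ n i, (p : ℚ) ^ deltaP p n * C n i =
      (-1) ^ (n - i) * qh ^ Nat.choose (n - i) 2 * gaussBinom qh n i := by
    intro n i
    rw [hC, mul_comm, div_mul_cancel₀ _ (hpne n)]
  have hqh' : qh = ((q ^ (p - 1) : ℤ) : ℚ) := by push_cast [hqh]; ring
  refine ⟨?_, ?_, ?_⟩
  · intro n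
    have : (p : ℚ) ^ deltaP p n * C n n = 1 := by
      rw [hcancel, Nat.sub_self, gaussBinom_self]; norm_num
    rw [this]
    constructor
    · simp only [inZLoc, Rat.den_ofNat]
      exact fun h => hp.one_lt.ne' (Nat.dvd_one.mp h)
    · simp only [Rat.num_ofNat]
      exact fun h => hp.one_lt.ne' (by exact_mod_cast Int.eq_one_of_dvd_one (by norm_num) h)
  · intro n i _
    rw [hcancel]
    have : (-1 : ℚ) ^ (n - i) * qh ^ Nat.choose (n - i) 2 * gaussBinom qh n i =
        (((-1) ^ (n - i) * (q ^ (p - 1)) ^ Nat.choose (n - i) 2 *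
          gaussBinom (q ^ (p - 1) : ℤ) n i : ℤ) : ℚ) := by
      have hm : ((gaussBinom (q ^ (p - 1)) n i : ℤ) : ℚ) =
          gaussBinom (((q ^ (p - 1) : ℤ)) : ℚ) n i :=
        gaussBinom_map (Int.castRingHom ℚ) _ n i
      rw [hqh']
      push_cast [hm]
      ring
    rw [this]
    simp only [inZLoc, Rat.den_intCast]
    exact fun h => hp.one_lt.ne' (Nat.eq_one_of_dvd_one h)
  · intro n i h
    rw [hC, gaussBinom_eq_zero qh n i h]
    simp
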